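/- Let L be a field, λ a partition of m and μ a partition of n with |λ_i − μ_i| ≤ 1 for all i (after padding with zeros). Then there exist A ∈ M_{m×n}(L) and B ∈ M_{n×m}(L) with AB nilpotent, μ(AB) = λ, and μ(BA) = μ. -/

import Mathlib

open Matrix

namespace FlandersConverse

/-- Index set of a partition: pairs `(i, j)` with `j < f i`. -/
abbrev Idx (N : ℕ) (f : ℕ → ℕ) := (i : Fin N) × Fin (f i)

lemma Idx.ext' {N : ℕ} {f : ℕ → ℕ} {x y : Idx N f}
    (h1 : (x.1 : ℕ) = y.1) (h2 : (x.2 : ℕ) = y.2) : x = y := by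
  obtain ⟨i, j⟩ := x
  obtain ⟨i', j'⟩ := y
  simp only at h1 h2
  have hi : i = i' := Fin.ext h1
  subst hi
  exact congrArg (Sigma.mk i) (Fin.ext h2)

variable (L : Type*) [Field L]

/-- The `k`-th power of the upward shift on the partition coordinates. -/
def SP (N : ℕ) (f : ℕ → ℕ) (k : ℕ) : Matrix (Idx N f) (Idx N f) L :=
  Matrix.of fun r c => if r.1 = c.1 ∧ (r.2 : ℕ) = (c.2 : ℕ) + k then (1 : L) else 0

variable {N : ℕ} {f : ℕ → ℕ}

lemma SP_zero : SP L N f 0 = 1 := by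
  ext r c
  rw [Matrix.one_apply]
  simp only [SP, Matrix.of_apply, Nat.add_zero]
  refine if_congr ⟨fun h => Idx.ext' (congrArg Fin.val h.1) h.2, ?_⟩ rfl rfl
  rintro rfl
  exact ⟨rfl, rfl⟩

lemma SP_succ (k : ℕ) : SP L N f 1 * SP L N f k = SP L N f (k + 1) := by
  ext r c
  rw [Matrix.mul_apply]
  simp only [SP, Matrix.of_apply]
  by_cases h : r.1 = c.1 ∧ (r.2 : ℕ) = (c.2 : ℕ) + (k + 1)
  · obtain ⟨h1, h2⟩ := h
    have hv : (r.1 : ℕ) = (c.1 : ℕ) := congrArg Fin.val h1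
    have hfr : f (r.1 : ℕ) = f (c.1 : ℕ) := by rw [hv]
    have hb : (c.2 : ℕ) + k < f (c.1 : ℕ) := by
      have := r.2.isLt; omega
    rw [if_pos ⟨h1, h2⟩, Finset.sum_eq_single (⟨c.1, ⟨(c.2 : ℕ) + k, hb⟩⟩ : Idx N f)]
    · rw [if_pos ⟨h1, by omega⟩, if_pos ⟨rfl, rfl⟩, one_mul]
    · intro x _ hx
      by_cases hB : x.1 = c.1 ∧ (x.2 : ℕ) = (c.2 : ℕ) + k
      · exact ((hx (Idx.ext' (congrArg Fin.val hB.1) hB.2)).elim)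
      · rw [if_neg hB, mul_zero]
    · intro hmem; exact absurd (Finset.mem_univ _) hmem
  · rw [if_neg h]
    apply Finset.sum_eq_zero
    intro x _
    by_cases hA : r.1 = x.1 ∧ (r.2 : ℕ) = (x.2 : ℕ) + 1
    · by_cases hB : x.1 = c.1 ∧ (x.2 : ℕ) = (c.2 : ℕ) + k
      · exact absurd ⟨hA.1.trans hB.1, by omega⟩ h
      · rw [if_neg hB, mul_zero]
    · rw [if_neg hA, zero_mul]

lemma SP_pow (k : ℕ) : SP L N f 1 ^ k = SP L N f k := by
  induction k with
  | zero => rw [pow_zero, SP_zero]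
  | succ k ih => rw [pow_succ', ih, SP_succ]

lemma SP_eq_zero {K : ℕ} (hK : ∀ i : Fin N, f i ≤ K) : SP L N f K = 0 := by
  ext r c
  simp only [SP, Matrix.of_apply, Matrix.zero_apply]
  rw [if_neg]
  rintro ⟨h1, h2⟩
  have := r.2.isLt
  have := hK r.1
  omega

lemma count_le (k c : ℕ) :
    (∑ j ∈ Finset.range c, if k ≤ j then 1 else 0) = c - k := by
  induction c with
  | zero => simp
  | succ c ih =>
      rw [Finset.sum_range_succ, ih]
      by_cases h : k ≤ c <;> simp [h] <;> omega

lemma SP_rank (k : ℕ) :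
    (SP L N f k).rank = ∑ i ∈ Finset.range N, (f i - k) := by
  classical
  have hcol : ∀ c : Idx N f, (SP L N f k)ᵀ c =
      if h : (c.2 : ℕ) + k < f (c.1 : ℕ) then
        Pi.single (⟨c.1, ⟨(c.2 : ℕ) + k, h⟩⟩ : Idx N f) (1 : L) else 0 := by
    intro c
    funext r
    simp only [Matrix.transpose_apply, SP, Matrix.of_apply]
    by_cases hlt : (c.2 : ℕ) + k < f (c.1 : ℕ)
    · rw [dif_pos hlt]
      by_cases hr : r = (⟨c.1, ⟨(c.2 : ℕ) + k, hlt⟩⟩ : Idx N f)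
      · subst hr
        rw [Pi.single_eq_same, if_pos ⟨rfl, rfl⟩]
      · rw [Pi.single_eq_of_ne hr, if_neg]
        rintro ⟨h1, h2⟩
        exact hr (Idx.ext' (congrArg Fin.val h1) h2)
    · rw [dif_neg hlt, Pi.zero_apply, if_neg]
      rintro ⟨h1, h2⟩
      have := r.2.isLt
      have hfr : f (r.1 : ℕ) = f (c.1 : ℕ) := by rw [congrArg Fin.val h1]
      omega
  have hinj : Function.Injective (fun r : Idx N f => Pi.single r (1 : L)) := by
    intro a b hab
    by_contra hne
    have h2 := congrFun hab a
    simp only at h2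
    rw [Pi.single_eq_same, Pi.single_eq_of_ne hne] at h2
    exact one_ne_zero h2
  have hspan : Submodule.span L (Set.range (SP L N f k)ᵀ) =
      Submodule.span L ((fun r => Pi.single r (1 : L)) '' {r : Idx N f | k ≤ (r.2 : ℕ)}) := by
    apply le_antisymm <;> rw [Submodule.span_le]
    · rintro _ ⟨c, rfl⟩
      rw [hcol c]
      split
      · rename_i hlt
        refine Submodule.subset_span ⟨_, ?_, rfl⟩
        simp only [Set.mem_setOf_eq]
        omega
      · exact Submodule.zero_mem _
    · rintro _ ⟨r, hr, rfl⟩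
      have hrk : k ≤ (r.2 : ℕ) := hr
      have hlt : ((r.2 : ℕ) - k) + k < f (r.1 : ℕ) := by have := r.2.isLt; omega
      apply Submodule.subset_span
      refine ⟨⟨r.1, ⟨(r.2 : ℕ) - k, by omega⟩⟩, ?_⟩
      rw [hcol, dif_pos hlt]
      refine congrArg (fun t => Pi.single t (1 : L)) (Idx.ext' rfl ?_)
      simp only []
      omega
  haveI : Fintype ((fun r : Idx N f => Pi.single r (1 : L)) '' {r : Idx N f | k ≤ (r.2 : ℕ)}) :=
    Set.Finite.fintype ((Set.toFinite _).image _)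
  have hli : LinearIndependent L
      ((↑) : ((fun r : Idx N f => Pi.single r (1 : L)) '' {r : Idx N f | k ≤ (r.2 : ℕ)}) →
        (Idx N f → L)) := by
    have hsub : ((fun r : Idx N f => Pi.single r (1 : L)) '' {r : Idx N f | k ≤ (r.2 : ℕ)}) ⊆
        Set.range (Pi.basisFun L (Idx N f)) := by
      rintro _ ⟨r, _, rfl⟩
      exact ⟨r, by simp⟩
    exact (Pi.basisFun L (Idx N f)).linearIndependent.linearIndepOn_id.mono hsub
  rw [Matrix.rank_eq_finrank_span_cols]
  change Module.finrank L (Submodule.span L (Set.range (SP L N f k)ᵀ)) = _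
  rw [hspan, finrank_span_set_eq_card hli,
    Set.toFinset_card]
  rw [Fintype.card_congr (Equiv.Set.image _ {r : Idx N f | k ≤ (r.2 : ℕ)} hinj).symm]
  rw [← Set.toFinset_card]
  simp only [Set.toFinset_setOf]
  rw [Finset.card_filter, ← Finset.univ_sigma_univ, Finset.sum_sigma,
    ← Fin.sum_univ_eq_sum_range (fun i => f i - k) N]
  refine Finset.sum_congr rfl fun i _ => ?_
  rw [← count_le k (f (i : ℕ))]
  exact Fin.sum_univ_eq_sum_range (fun j => if k ≤ j then 1 else 0) (f (i : ℕ))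

variable (N₁ N₂ : ℕ) (f g : ℕ → ℕ)

/-- The matrix `A`. -/
def MA : Matrix (Idx N₁ f) (Idx N₂ g) L :=
  Matrix.of fun r c =>
    if (r.1 : ℕ) = (c.1 : ℕ) ∧
        ((g (c.1 : ℕ) ≤ f (c.1 : ℕ) ∧ (r.2 : ℕ) = (c.2 : ℕ) + 1) ∨
         (f (c.1 : ℕ) < g (c.1 : ℕ) ∧ (r.2 : ℕ) = (c.2 : ℕ)))
    then (1 : L) else 0

/-- The matrix `B`. -/
def MB : Matrix (Idx N₂ g) (Idx N₁ f) L :=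
  Matrix.of fun r c =>
    if (r.1 : ℕ) = (c.1 : ℕ) ∧
        ((g (c.1 : ℕ) ≤ f (c.1 : ℕ) ∧ (r.2 : ℕ) = (c.2 : ℕ)) ∨
         (f (c.1 : ℕ) < g (c.1 : ℕ) ∧ (r.2 : ℕ) = (c.2 : ℕ) + 1))
    then (1 : L) else 0

variable {N₁ N₂ f g}

lemma MA_mul_MB (hfg : ∀ i, f i ≤ g i + 1) (hg0 : ∀ i, g i ≠ 0 → i < N₂) :
    MA L N₁ N₂ f g * MB L N₁ N₂ f g = SP L N₁ f 1 := by
  ext r c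
  rw [Matrix.mul_apply]
  simp only [MA, MB, SP, Matrix.of_apply]
  by_cases h : r.1 = c.1 ∧ (r.2 : ℕ) = (c.2 : ℕ) + 1
  · obtain ⟨h1, h2⟩ := h
    have hv : (r.1 : ℕ) = (c.1 : ℕ) := congrArg Fin.val h1
    have hfr : f (r.1 : ℕ) = f (c.1 : ℕ) := by rw [hv]
    have hflt : (c.2 : ℕ) + 1 < f (c.1 : ℕ) + 1 := by
      have := r.2.isLt; omega
    rw [if_pos ⟨h1, h2⟩]
    by_cases hb : g (c.1 : ℕ) ≤ f (c.1 : ℕ)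
    · have hc2 : (c.2 : ℕ) < g (c.1 : ℕ) := by have := hfg (c.1 : ℕ); omega
      have hin : (c.1 : ℕ) < N₂ := hg0 _ (by omega)
      rw [Finset.sum_eq_single (⟨⟨(c.1 : ℕ), hin⟩, ⟨(c.2 : ℕ), hc2⟩⟩ : Idx N₂ g)]
      · rw [if_pos ⟨hv, Or.inl ⟨hb, h2⟩⟩, if_pos ⟨rfl, Or.inl ⟨hb, rfl⟩⟩, one_mul]
      · intro x _ hx
        by_cases hB : (x.1 : ℕ) = (c.1 : ℕ) ∧
            ((g (c.1 : ℕ) ≤ f (c.1 : ℕ) ∧ (x.2 : ℕ) = (c.2 : ℕ)) ∨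
             (f (c.1 : ℕ) < g (c.1 : ℕ) ∧ (x.2 : ℕ) = (c.2 : ℕ) + 1))
        · refine ((hx (Idx.ext' hB.1 ?_)).elim)
          rcases hB.2 with ⟨_, he⟩ | ⟨hlt, _⟩
          · exact he
          · omega
        · rw [if_neg hB, mul_zero]
      · intro hmem; exact absurd (Finset.mem_univ _) hmem
    · have hb' : f (c.1 : ℕ) < g (c.1 : ℕ) := not_le.mp hb
      have hcg : (c.2 : ℕ) + 1 < g (c.1 : ℕ) := by omega
      have hin : (c.1 : ℕ) < N₂ := hg0 _ (by omega)
      rw [Finset.sum_eq_single (⟨⟨(c.1 : ℕ), hin⟩, ⟨(c.2 : ℕ) + 1, hcg⟩⟩ : Idx N₂ g)]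
      · rw [if_pos ⟨hv, Or.inr ⟨hb', h2⟩⟩, if_pos ⟨rfl, Or.inr ⟨hb', rfl⟩⟩, one_mul]
      · intro x _ hx
        by_cases hB : (x.1 : ℕ) = (c.1 : ℕ) ∧
            ((g (c.1 : ℕ) ≤ f (c.1 : ℕ) ∧ (x.2 : ℕ) = (c.2 : ℕ)) ∨
             (f (c.1 : ℕ) < g (c.1 : ℕ) ∧ (x.2 : ℕ) = (c.2 : ℕ) + 1))
        · refine ((hx (Idx.ext' hB.1 ?_)).elim)
          rcases hB.2 with ⟨hle, _⟩ | ⟨_, he⟩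
          · omega
          · exact he
        · rw [if_neg hB, mul_zero]
      · intro hmem; exact absurd (Finset.mem_univ _) hmem
  · rw [if_neg h]
    apply Finset.sum_eq_zero
    intro x _
    by_cases hA : (r.1 : ℕ) = (x.1 : ℕ) ∧
        ((g (x.1 : ℕ) ≤ f (x.1 : ℕ) ∧ (r.2 : ℕ) = (x.2 : ℕ) + 1) ∨
         (f (x.1 : ℕ) < g (x.1 : ℕ) ∧ (r.2 : ℕ) = (x.2 : ℕ)))
    · by_cases hB : (x.1 : ℕ) = (c.1 : ℕ) ∧
          ((g (c.1 : ℕ) ≤ f (c.1 : ℕ) ∧ (x.2 : ℕ) = (c.2 : ℕ)) ∨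
           (f (c.1 : ℕ) < g (c.1 : ℕ) ∧ (x.2 : ℕ) = (c.2 : ℕ) + 1))
      · exfalso
        obtain ⟨hA1, hA2⟩ := hA
        obtain ⟨hB1, hB2⟩ := hB
        have e1 : g (x.1 : ℕ) = g (c.1 : ℕ) := by rw [hB1]
        have e2 : f (x.1 : ℕ) = f (c.1 : ℕ) := by rw [hB1]
        refine h ⟨Fin.ext (hA1.trans hB1), ?_⟩
        rcases hA2 with ⟨h3, h4⟩ | ⟨h3, h4⟩ <;> rcases hB2 with ⟨h5, h6⟩ | ⟨h5, h6⟩ <;> omega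
      · rw [if_neg hB, mul_zero]
    · rw [if_neg hA, zero_mul]

lemma MB_mul_MA (hgf : ∀ i, g i ≤ f i + 1) (hf0 : ∀ i, f i ≠ 0 → i < N₁) :
    MB L N₁ N₂ f g * MA L N₁ N₂ f g = SP L N₂ g 1 := by
  ext r c
  rw [Matrix.mul_apply]
  simp only [MA, MB, SP, Matrix.of_apply]
  by_cases h : r.1 = c.1 ∧ (r.2 : ℕ) = (c.2 : ℕ) + 1
  · obtain ⟨h1, h2⟩ := h
    have hv : (r.1 : ℕ) = (c.1 : ℕ) := congrArg Fin.val h1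
    have hgr : g (r.1 : ℕ) = g (c.1 : ℕ) := by rw [hv]
    have hglt : (c.2 : ℕ) + 1 < g (c.1 : ℕ) + 1 := by
      have := r.2.isLt; omega
    rw [if_pos ⟨h1, h2⟩]
    by_cases hb : g (c.1 : ℕ) ≤ f (c.1 : ℕ)
    · have hc2 : (c.2 : ℕ) + 1 < f (c.1 : ℕ) := by omega
      have hin : (c.1 : ℕ) < N₁ := hf0 _ (by omega)
      rw [Finset.sum_eq_single (⟨⟨(c.1 : ℕ), hin⟩, ⟨(c.2 : ℕ) + 1, hc2⟩⟩ : Idx N₁ f)]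
      · rw [if_pos ⟨hv, Or.inl ⟨hb, h2⟩⟩, if_pos ⟨rfl, Or.inl ⟨hb, rfl⟩⟩, one_mul]
      · intro x _ hx
        by_cases hB : (x.1 : ℕ) = (c.1 : ℕ) ∧
            ((g (c.1 : ℕ) ≤ f (c.1 : ℕ) ∧ (x.2 : ℕ) = (c.2 : ℕ) + 1) ∨
             (f (c.1 : ℕ) < g (c.1 : ℕ) ∧ (x.2 : ℕ) = (c.2 : ℕ)))
        · refine ((hx (Idx.ext' hB.1 ?_)).elim)
          rcases hB.2 with ⟨_, he⟩ | ⟨hlt, _⟩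
          · exact he
          · omega
        · rw [if_neg hB, mul_zero]
      · intro hmem; exact absurd (Finset.mem_univ _) hmem
    · have hb' : f (c.1 : ℕ) < g (c.1 : ℕ) := not_le.mp hb
      have hc2 : (c.2 : ℕ) < f (c.1 : ℕ) := by have := hgf (c.1 : ℕ); omega
      have hin : (c.1 : ℕ) < N₁ := hf0 _ (by omega)
      rw [Finset.sum_eq_single (⟨⟨(c.1 : ℕ), hin⟩, ⟨(c.2 : ℕ), hc2⟩⟩ : Idx N₁ f)]
      · rw [if_pos ⟨hv, Or.inr ⟨hb', h2⟩⟩, if_pos ⟨rfl, Or.inr ⟨hb', rfl⟩⟩, one_mul]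
      · intro x _ hx
        by_cases hB : (x.1 : ℕ) = (c.1 : ℕ) ∧
            ((g (c.1 : ℕ) ≤ f (c.1 : ℕ) ∧ (x.2 : ℕ) = (c.2 : ℕ) + 1) ∨
             (f (c.1 : ℕ) < g (c.1 : ℕ) ∧ (x.2 : ℕ) = (c.2 : ℕ)))
        · refine ((hx (Idx.ext' hB.1 ?_)).elim)
          rcases hB.2 with ⟨hle, _⟩ | ⟨_, he⟩
          · omega
          · exact he
        · rw [if_neg hB, mul_zero]
      · intro hmem; exact absurd (Finset.mem_univ _) hmem
  · rw [if_neg h]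
    apply Finset.sum_eq_zero
    intro x _
    by_cases hA : (r.1 : ℕ) = (x.1 : ℕ) ∧
        ((g (x.1 : ℕ) ≤ f (x.1 : ℕ) ∧ (r.2 : ℕ) = (x.2 : ℕ)) ∨
         (f (x.1 : ℕ) < g (x.1 : ℕ) ∧ (r.2 : ℕ) = (x.2 : ℕ) + 1))
    · by_cases hB : (x.1 : ℕ) = (c.1 : ℕ) ∧
          ((g (c.1 : ℕ) ≤ f (c.1 : ℕ) ∧ (x.2 : ℕ) = (c.2 : ℕ) + 1) ∨
           (f (c.1 : ℕ) < g (c.1 : ℕ) ∧ (x.2 : ℕ) = (c.2 : ℕ)))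
      · exfalso
        obtain ⟨hA1, hA2⟩ := hA
        obtain ⟨hB1, hB2⟩ := hB
        have e1 : g (x.1 : ℕ) = g (c.1 : ℕ) := by rw [hB1]
        have e2 : f (x.1 : ℕ) = f (c.1 : ℕ) := by rw [hB1]
        refine h ⟨Fin.ext (hA1.trans hB1), ?_⟩
        rcases hA2 with ⟨h3, h4⟩ | ⟨h3, h4⟩ <;> rcases hB2 with ⟨h5, h6⟩ | ⟨h5, h6⟩ <;> omega
      · rw [if_neg hB, mul_zero]
    · rw [if_neg hA, zero_mul]

end FlandersConverse

open FlandersConverse in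
/-- Flanders' theorem, converse direction: given partitions `λ ⊢ m`, `μ ⊢ n`
with `|λᵢ - μᵢ| ≤ 1` for all `i`, there are matrices `A`, `B` with `AB`
nilpotent of Jordan type `λ` and `BA` of Jordan type `μ` (encoded via ranks of
powers: `rank(N^k) = ∑ᵢ (λᵢ - k)₊`). -/
theorem stmt11 (L : Type*) [Field L] (m n : ℕ)
    (lam mu : ℕ → ℕ) (hlam : Antitone lam) (hmu : Antitone mu)
    (hlam0 : ∀ i, m ≤ i → lam i = 0) (hmu0 : ∀ i, n ≤ i → mu i = 0)
    (hlsum : ∑ i ∈ Finset.range m, lam i = m)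
    (hmsum : ∑ i ∈ Finset.range n, mu i = n)
    (hclose : ∀ i, lam i ≤ mu i + 1 ∧ mu i ≤ lam i + 1) :
    ∃ (A : Matrix (Fin m) (Fin n) L) (B : Matrix (Fin n) (Fin m) L),
      IsNilpotent (A * B) ∧
      (∀ k : ℕ, ((A * B) ^ k).rank = ∑ i ∈ Finset.range m, (lam i - k)) ∧
      (∀ k : ℕ, ((B * A) ^ k).rank = ∑ i ∈ Finset.range n, (mu i - k)) := by
  classical
  have hf0 : ∀ i, lam i ≠ 0 → i < m := by
    intro i h
    by_contra h'
    exact h (hlam0 i (not_lt.mp h'))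
  have hg0 : ∀ i, mu i ≠ 0 → i < n := by
    intro i h
    by_contra h'
    exact h (hmu0 i (not_lt.mp h'))
  have hcl : ∀ i : Fin m, lam i ≤ m := by
    intro i
    calc lam i ≤ ∑ j ∈ Finset.range m, lam j :=
          Finset.single_le_sum (fun _ _ => Nat.zero_le _) (Finset.mem_range.mpr i.isLt)
      _ = m := hlsum
  have hcm : ∀ i : Fin n, mu i ≤ n := by
    intro i
    calc mu i ≤ ∑ j ∈ Finset.range n, mu j :=
          Finset.single_le_sum (fun _ _ => Nat.zero_le _) (Finset.mem_range.mpr i.isLt)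
      _ = n := hmsum
  have cardL : Fintype.card (Fin m) = Fintype.card (Idx m lam) := by
    simp [Fintype.card_sigma, Fin.sum_univ_eq_sum_range, hlsum]
  have cardM : Fintype.card (Fin n) = Fintype.card (Idx n mu) := by
    simp [Fintype.card_sigma, Fin.sum_univ_eq_sum_range, hmsum]
  let eL : Fin m ≃ Idx m lam := Fintype.equivOfCardEq cardL
  let eM : Fin n ≃ Idx n mu := Fintype.equivOfCardEq cardM
  refine ⟨(MA L m n lam mu).submatrix eL eM, (MB L m n lam mu).submatrix eM eL, ?_, ?_, ?_⟩
  all_goals {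
    have hAB : (MA L m n lam mu).submatrix eL eM * (MB L m n lam mu).submatrix eM eL
        = (SP L m lam 1).submatrix eL eL := by
      rw [Matrix.submatrix_mul_equiv, MA_mul_MB L (fun i => (hclose i).1) hg0]
    have hBA : (MB L m n lam mu).submatrix eM eL * (MA L m n lam mu).submatrix eL eM
        = (SP L n mu 1).submatrix eM eM := by
      rw [Matrix.submatrix_mul_equiv, MB_mul_MA L (fun i => (hclose i).2) hf0]
    have hABpow : ∀ k : ℕ,
        ((MA L m n lam mu).submatrix eL eM * (MB L m n lam mu).submatrix eM eL) ^ k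
          = (SP L m lam k).submatrix eL eL := by
      intro k
      induction k with
      | zero => rw [pow_zero, SP_zero, Matrix.submatrix_one_equiv]
      | succ k ih =>
          rw [pow_succ', ih, hAB, Matrix.submatrix_mul_equiv, SP_succ]
    have hBApow : ∀ k : ℕ,
        ((MB L m n lam mu).submatrix eM eL * (MA L m n lam mu).submatrix eL eM) ^ k
          = (SP L n mu k).submatrix eM eM := by
      intro k
      induction k with
      | zero => rw [pow_zero, SP_zero, Matrix.submatrix_one_equiv]
      | succ k ih =>
          rw [pow_succ', ih, hBA, Matrix.submatrix_mul_equiv, SP_succ]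
    first
    | exact ⟨m, by rw [hABpow m, SP_eq_zero L hcl]; ext r c; simp⟩
    | exact fun k => by rw [hABpow k, Matrix.rank_submatrix, SP_rank]
    | exact fun k => by rw [hBApow k, Matrix.rank_submatrix, SP_rank]
  }
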